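/- Let {w_x^±}_{x∈D} be a feasible solution to the state-reflection problem {(σ_x⁺, σ_x⁻, O_x)}_{x∈D}. Let A be any subspace of V ⊕ H with span{σ_x⁺ ⊕ w_x⁺ : x ∈ D} ⊆ A ⊆ (span{σ_y⁻ ⊕ (−w_y⁻) : y ∈ D})^⊥, and let U := 2Π_A − I, where Π_A is the orthogonal projection onto A. Then for every x ∈ D, the unitary U ∘ (I_V ⊕ O_x) fixes σ_x⁺ ⊕ w_x⁺ and maps σ_x⁻ ⊕ w_x⁻ to (−σ_x⁻) ⊕ w_x⁻; that is, U(I_V ⊕ O_x) transduces σ_x⁺ to σ_x⁺ with catalyst w_x⁺ and transduces σ_x⁻ to −σ_x⁻ with catalyst w_x⁻. -/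

import Mathlib

open scoped InnerProductSpace

variable {V : Type*} [NormedAddCommGroup V] [InnerProductSpace ℂ V]
variable {H : Type*} [NormedAddCommGroup H] [InnerProductSpace ℂ H]

/-- The operator `I_V ⊕ O` on the Hilbert-space direct sum `V ⊕ H`. -/
noncomputable def directSumOp (O : H →ₗ[ℂ] H) :
    WithLp 2 (V × H) →ₗ[ℂ] WithLp 2 (V × H) :=
  (WithLp.linearEquiv 2 ℂ (V × H)).symm.toLinearMap ∘ₗ
    (LinearMap.id.prodMap O) ∘ₗ (WithLp.linearEquiv 2 ℂ (V × H)).toLinearMap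

/-- Given a feasible solution `{w_x^±}` to a state-reflection problem
`{(σ_x⁺, σ_x⁻, O_x)}` and a subspace `A` of `V ⊕ H` with
`span{σ_x⁺ ⊕ w_x⁺} ⊆ A ⊆ (span{σ_y⁻ ⊕ (-w_y⁻)})ᗮ`, the unitary `U ∘ (I_V ⊕ O_x)` with
`U = 2Π_A - I` (the reflection through `A`) fixes `σ_x⁺ ⊕ w_x⁺` and maps `σ_x⁻ ⊕ w_x⁻` to
`(-σ_x⁻) ⊕ w_x⁻`. -/
theorem transducer_from_state_reflection
    {D : Type*} [Fintype D] [FiniteDimensional ℂ V] [FiniteDimensional ℂ H]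
    (σp σm : D → V) (O : D → (H →ₗ[ℂ] H))
    (hOunitary : ∀ x (u v : H), ⟪O x u, O x v⟫_ℂ = ⟪u, v⟫_ℂ)
    (hOinv : ∀ x (v : H), O x (O x v) = v)
    (wp wm : D → H)
    (hwp : ∀ x, O x (wp x) = wp x)
    (hwm : ∀ x, O x (wm x) = -wm x)
    (hfeas : ∀ x y, ⟪wp x, wm y⟫_ℂ = ⟪σp x, σm y⟫_ℂ)
    (A : Submodule ℂ (WithLp 2 (V × H)))
    (hAlower : ∀ x : D, (WithLp.equiv 2 (V × H)).symm (σp x, wp x) ∈ A)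
    (hAupper : A ≤ (Submodule.span ℂ
      (Set.range fun y : D => (WithLp.equiv 2 (V × H)).symm (σm y, -wm y)))ᗮ) :
    ∀ x : D,
      Submodule.reflection A (directSumOp (O x) ((WithLp.equiv 2 (V × H)).symm (σp x, wp x))) =
        (WithLp.equiv 2 (V × H)).symm (σp x, wp x) ∧
      Submodule.reflection A (directSumOp (O x) ((WithLp.equiv 2 (V × H)).symm (σm x, wm x))) =
        (WithLp.equiv 2 (V × H)).symm (-σm x, wm x) := by
  intro x
  have hds : ∀ (a : V) (b : H),
      directSumOp (O x) ((WithLp.equiv 2 (V × H)).symm (a, b)) =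
        (WithLp.equiv 2 (V × H)).symm (a, O x b) := by
    intro a b
    rfl
  constructor
  · rw [hds, hwp x]
    exact Submodule.reflection_mem_subspace_eq_self (hAlower x)
  · rw [hds, hwm x]
    have hmem : (WithLp.equiv 2 (V × H)).symm (σm x, -wm x) ∈ Aᗮ :=
      Submodule.orthogonal_le hAupper
        (Submodule.le_orthogonal_orthogonal _ (Submodule.subset_span ⟨x, rfl⟩))
    rw [Submodule.reflection_mem_subspace_orthogonalComplement_eq_neg hmem]
    have : ((σm x, -wm x) : V × H) = -(-σm x, wm x) := by simp [Prod.ext_iff]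
    rw [this]
    have h2 : (WithLp.equiv 2 (V × H)).symm (-(-σm x, wm x)) =
        -((WithLp.equiv 2 (V × H)).symm (-σm x, wm x)) := rfl
    rw [h2, neg_neg]
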